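/- arXiv:1804.06555 — 3 statements merged into one kernel-verified Lean document; each statement's English description precedes it below -/
import Mathlib

section
/- Under Assumption (σ), for every x ∈ ℝ^d the map y ↦ σ(x,y) is a C²-diffeomorphism of ℝ^d onto ℝ^d. Writing τ(x,·) for its inverse, one has ‖φ‖_∞^{-1}|z| ≤ |τ(x,z)| ≤ ‖φ‖_∞|z| for all x, z ∈ ℝ^d; there exists a constant C > 0 such that |τ(x₁,z) − τ(x₂,z)| ≤ C|x₁ − x₂||z| for all x₁, x₂, z ∈ ℝ^d; and if moreover x ↦ σ(x,y) is 1-periodic for each y, then x ↦ τ(x,z) is 1-periodic for each z. -/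
open MeasureTheory Metric
open Topology Filter

noncomputable section

abbrev Ed (d : ℕ) := EuclideanSpace ℝ (Fin d)

def supNorm {d : ℕ} {F : Type*} [NormedAddCommGroup F] (f : Ed d → F) : ℝ := ⨆ x, ‖f x‖

def hSemi {d : ℕ} {F : Type*} [NormedAddCommGroup F] (θ : ℝ) (f : Ed d → F) : ℝ :=
  sInf {M | 0 ≤ M ∧ ∀ x y, ‖f x - f y‖ ≤ M * ‖x - y‖ ^ θ}

def IsPeriodic {d : ℕ} {F : Type*} (f : Ed d → F) : Prop :=
  ∀ (x : Ed d) (k : Fin d → ℤ),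
    f (x + (EuclideanSpace.equiv (Fin d) ℝ).symm (fun i => (k i : ℝ))) = f x

structure SigmaHyp (d : ℕ) (σ : Ed d → Ed d → Ed d) (Cσ : ℝ) (φ : Ed d → ℝ) : Prop where
  hC : 0 < Cσ
  smooth : ∀ x, ContDiff ℝ 2 (σ x)
  lipschitz : ∀ x₁ x₂ y, ‖σ x₁ y - σ x₂ y‖ ≤ Cσ * ‖x₁ - x₂‖ * ‖y‖
  odd : ∀ x y, σ x (-y) = -σ x y
  jacobian : ∀ x y, ∃ L : Ed d ≃L[ℝ] Ed d,
    (L : Ed d →L[ℝ] Ed d) = fderiv ℝ (σ x) y ∧ ‖(L.symm : Ed d →L[ℝ] Ed d)‖ ≤ Cσ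
  phi_meas : Measurable φ
  phi_pos : ∀ x, 0 < φ x
  phi_bdd : ∃ M, ∀ x, φ x ≤ M
  growth_lower : ∀ x y, (φ x)⁻¹ * ‖y‖ ≤ ‖σ x y‖
  growth_upper : ∀ x y, ‖σ x y‖ ≤ φ x * ‖y‖

section Aux

variable {d : ℕ}

/-- Repackage the Jacobian hypothesis as a strict derivative with invertible value. -/
lemma hsfd_at (f : Ed d → Ed d) (hf : ContDiff ℝ 2 f) {Cσ : ℝ}
    (hjac : ∀ y, ∃ L : Ed d ≃L[ℝ] Ed d,
      (L : Ed d →L[ℝ] Ed d) = fderiv ℝ f y ∧ ‖(L.symm : Ed d →L[ℝ] Ed d)‖ ≤ Cσ) (a : Ed d) :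
    ∃ L : Ed d ≃L[ℝ] Ed d, ‖(L.symm : Ed d →L[ℝ] Ed d)‖ ≤ Cσ ∧
      HasStrictFDerivAt f (L : Ed d →L[ℝ] Ed d) a := by
  obtain ⟨L, hL1, hL2⟩ := hjac a
  refine ⟨L, hL2, ?_⟩
  rw [hL1]
  exact (hf.contDiffAt).hasStrictFDerivAt (by norm_num)

/-- A C² map with everywhere invertible derivative, proper via a linear lower growth bound,
and with trivial fiber over `0`, is bijective. -/
lemma bijective_aux (f : Ed d → Ed d) (hf : ContDiff ℝ 2 f) {Cσ c : ℝ}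
    (hjac : ∀ y, ∃ L : Ed d ≃L[ℝ] Ed d,
      (L : Ed d →L[ℝ] Ed d) = fderiv ℝ f y ∧ ‖(L.symm : Ed d →L[ℝ] Ed d)‖ ≤ Cσ)
    (hc : 0 < c) (hlow : ∀ y, c * ‖y‖ ≤ ‖f y‖) (h0 : f 0 = 0) :
    Function.Bijective f := by
  classical
  have hcont : Continuous f := hf.continuous
  choose L hLn hLs using fun a => hsfd_at f hf hjac a
  have hLs : ∀ a, HasStrictFDerivAt f (L a : Ed d →L[ℝ] Ed d) a := hLs
  -- f is a closed map
  have hclosed : IsClosedMap f := by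
    intro C hC
    apply IsSeqClosed.isClosed
    intro u z hu hz
    choose y hyC hyf using hu
    have hKc : IsCompact (insert z (Set.range u)) := hz.isCompact_insert_range
    obtain ⟨R, hR⟩ := (isBounded_iff_forall_norm_le).mp hKc.isBounded
    have hyb : ∀ n, y n ∈ closedBall (0 : Ed d) (R / c) := by
      intro n
      rw [mem_closedBall_zero_iff, le_div_iff₀ hc]
      calc ‖y n‖ * c = c * ‖y n‖ := mul_comm _ _
        _ ≤ ‖f (y n)‖ := hlow (y n)
        _ = ‖u n‖ := by rw [hyf n]
        _ ≤ R := hR _ (Set.mem_insert_of_mem _ ⟨n, rfl⟩)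
    obtain ⟨p, _, ψ, hψmono, hψtend⟩ := (isCompact_closedBall (0 : Ed d) (R / c)).tendsto_subseq hyb
    have hpC : p ∈ C := hC.mem_of_tendsto hψtend
      (Filter.Eventually.of_forall fun n => hyC (ψ n))
    have h1 : Filter.Tendsto (fun n => f (y (ψ n))) Filter.atTop (𝓝 (f p)) :=
      ((hcont.tendsto p).comp hψtend)
    have h2 : (fun n => f (y (ψ n))) = fun n => u (ψ n) := funext fun n => hyf (ψ n)
    have h3 : Filter.Tendsto (fun n => u (ψ n)) Filter.atTop (𝓝 z) :=
      hz.comp hψmono.tendsto_atTop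
    have hfp : f p = z := tendsto_nhds_unique (h2 ▸ h1) h3
    exact ⟨p, hpC, hfp⟩
  -- fibers are finite
  have hfibfin : ∀ z, (f ⁻¹' {z}).Finite := by
    intro z
    have hcl : IsClosed (f ⁻¹' {z}) := isClosed_singleton.preimage hcont
    have hsub : f ⁻¹' {z} ⊆ closedBall 0 (‖z‖ / c) := by
      intro q hq
      simp only [Set.mem_preimage, Set.mem_singleton_iff] at hq
      rw [mem_closedBall_zero_iff, le_div_iff₀ hc]
      calc ‖q‖ * c = c * ‖q‖ := mul_comm _ _
        _ ≤ ‖f q‖ := hlow q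
        _ = ‖z‖ := by rw [hq]
    have hcomp : IsCompact (f ⁻¹' {z}) := (isCompact_closedBall _ _).of_isClosed_subset hcl hsub
    obtain ⟨t, htsub, htcover⟩ := hcomp.elim_nhds_subcover
      (fun a => ((hLs a).toOpenPartialHomeomorph f).source)
      (fun a _ => (((hLs a).toOpenPartialHomeomorph f).open_source).mem_nhds
        (hLs a).mem_toOpenPartialHomeomorph_source)
    apply Set.Finite.subset t.finite_toSet
    intro p hp
    have hp' := htcover hp
    simp only [Set.mem_iUnion] at hp'
    obtain ⟨a, hat, hpa⟩ := hp'
    have haz : a ∈ f ⁻¹' {z} := htsub a hat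
    have hinj : Set.InjOn f ((hLs a).toOpenPartialHomeomorph f).source := by
      have h := ((hLs a).toOpenPartialHomeomorph f).injOn
      rwa [(hLs a).toOpenPartialHomeomorph_coe] at h
    have hpz : f p = f a := by
      simp only [Set.mem_preimage, Set.mem_singleton_iff] at hp haz
      rw [hp, haz]
    have : p = a := hinj hpa (hLs a).mem_toOpenPartialHomeomorph_source hpz
    simpa [this] using hat
  -- number of points in each fiber is locally constant
  have hlc : IsLocallyConstant (fun z => (f ⁻¹' {z}).ncard) := by
    rw [IsLocallyConstant.iff_eventually_eq]
    intro z₀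
    set F := f ⁻¹' {z₀} with hF
    have hFfin : F.Finite := hfibfin z₀
    set r : Ed d → ℝ := fun a => if h : (F \ {a}).Nonempty then infDist a (F \ {a}) / 2 else 1
      with hrdef
    have hrpos : ∀ a ∈ F, 0 < r a := by
      intro a _
      by_cases h : (F \ {a}).Nonempty
      · rw [hrdef]; simp only [h, dif_pos]
        have hcl : IsClosed (F \ {a}) := (hFfin.subset Set.diff_subset).isClosed
        have hnm : a ∉ F \ {a} := fun hx => hx.2 rfl
        have := (hcl.notMem_iff_infDist_pos h).mp hnm
        linarith
      · rw [hrdef]; simp [h]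
    have hrle : ∀ a ∈ F, ∀ b ∈ F, a ≠ b → r a ≤ dist a b / 2 := by
      intro a _ b hb hab
      have hbmem : b ∈ F \ {a} := ⟨hb, fun hba => hab (by simpa using hba.symm)⟩
      have hne : (F \ {a}).Nonempty := ⟨b, hbmem⟩
      rw [hrdef]; simp only [hne, dif_pos]
      have := infDist_le_dist_of_mem (x := a) hbmem
      linarith
    set U : Ed d → Set (Ed d) :=
      fun a => ((hLs a).toOpenPartialHomeomorph f).source ∩ ball a (r a) with hU
    have hUopen : ∀ a, IsOpen (U a) := fun a =>
      ((hLs a).toOpenPartialHomeomorph f).open_source.inter isOpen_ball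
    have hUmem : ∀ a ∈ F, a ∈ U a := fun a ha =>
      ⟨(hLs a).mem_toOpenPartialHomeomorph_source, mem_ball_self (hrpos a ha)⟩
    have hUdisj : ∀ a ∈ F, ∀ b ∈ F, a ≠ b → ∀ p, p ∈ U a → p ∈ U b → False := by
      intro a ha b hb hab p hpa hpb
      have h1 : dist p a < r a := mem_ball.mp hpa.2
      have h2 : dist p b < r b := mem_ball.mp hpb.2
      have h3 := hrle a ha b hb hab
      have h4 := hrle b hb a ha hab.symm
      have h5 : dist a b ≤ dist a p + dist p b := dist_triangle a p b
      rw [dist_comm a p] at h5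
      rw [dist_comm b a] at h4
      linarith
    have hinjOn : ∀ a, Set.InjOn f (U a) := by
      intro a
      have h := ((hLs a).toOpenPartialHomeomorph f).injOn
      rw [(hLs a).toOpenPartialHomeomorph_coe] at h
      exact h.mono Set.inter_subset_left
    have hfUopen : ∀ a, IsOpen (f '' U a) := by
      intro a
      have h := ((hLs a).toOpenPartialHomeomorph f).isOpen_image_of_subset_source (hUopen a)
        Set.inter_subset_left
      rwa [(hLs a).toOpenPartialHomeomorph_coe] at h
    set Utot := ⋃ a ∈ F, U a with hUtot
    have hUtotOpen : IsOpen Utot := isOpen_biUnion fun a _ => hUopen a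
    set V := (⋂ a ∈ F, f '' U a) ∩ (f '' Utotᶜ)ᶜ with hV
    have hVopen : IsOpen V := by
      apply IsOpen.inter
      · exact hFfin.isOpen_biInter fun a _ => hfUopen a
      · exact (hclosed _ hUtotOpen.isClosed_compl).isOpen_compl
    have hz₀V : z₀ ∈ V := by
      constructor
      · refine Set.mem_iInter₂.mpr fun a ha => ⟨a, hUmem a ha, ?_⟩
        exact ha
      · intro hmem
        obtain ⟨q, hq1, hq2⟩ := hmem
        have hqF : q ∈ F := by simp [hF, hq2]
        exact hq1 (Set.mem_biUnion hqF (hUmem q hqF))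
    filter_upwards [hVopen.mem_nhds hz₀V] with z hz
    obtain ⟨hz1, hz2⟩ := hz
    have hp : ∀ a ∈ F, ∃ p, p ∈ U a ∧ f p = z := by
      intro a ha
      obtain ⟨p, hp1, hp2⟩ := Set.mem_iInter₂.mp hz1 a ha
      exact ⟨p, hp1, hp2⟩
    choose! p hp1 hp2 using hp
    have himg : f ⁻¹' {z} = p '' F := by
      ext q
      simp only [Set.mem_preimage, Set.mem_singleton_iff, Set.mem_image]
      constructor
      · intro hq
        have hqU : q ∈ Utot := by
          by_contra hq'
          exact hz2 ⟨q, hq', hq⟩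
        have hqU' := hqU
        simp only [hUtot, Set.mem_iUnion] at hqU'
        obtain ⟨a, ha, hqa⟩ := hqU'
        refine ⟨a, ha, ?_⟩
        exact hinjOn a (hp1 a ha) hqa (by rw [hp2 a ha, hq])
      · rintro ⟨a, ha, rfl⟩
        exact hp2 a ha
    have hinjF : Set.InjOn p F := by
      intro a ha b hb hab2
      by_contra hne
      exact hUdisj a ha b hb hne (p a) (hp1 a ha) (hab2 ▸ hp1 b hb)
    show (f ⁻¹' {z}).ncard = (f ⁻¹' {z₀}).ncard
    rw [himg, Set.ncard_image_of_injOn hinjF]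
  -- each fiber has exactly one point
  have hone : ∀ z, (f ⁻¹' {z}).ncard = 1 := by
    have hzero : f ⁻¹' {(0 : Ed d)} = {0} := by
      ext q
      simp only [Set.mem_preimage, Set.mem_singleton_iff]
      constructor
      · intro hq
        have h1 := hlow q
        rw [hq, norm_zero] at h1
        have h2 : ‖q‖ ≤ 0 := by nlinarith [norm_nonneg q]
        exact norm_eq_zero.mp (le_antisymm h2 (norm_nonneg q))
      · intro hq; rw [hq, h0]
    intro z
    have := hlc.apply_eq_of_preconnectedSpace z 0
    rw [this, hzero, Set.ncard_singleton]
  constructor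
  · intro a b hab
    obtain ⟨q, hq⟩ := Set.ncard_eq_one.mp (hone (f b))
    have ha : a ∈ f ⁻¹' {f b} := by simp [hab]
    have hb : b ∈ f ⁻¹' {f b} := by simp
    rw [hq] at ha hb
    simp only [Set.mem_singleton_iff] at ha hb
    rw [ha, hb]
  · intro z
    obtain ⟨q, hq⟩ := Set.ncard_eq_one.mp (hone z)
    refine ⟨q, ?_⟩
    have : q ∈ f ⁻¹' {z} := by rw [hq]; exact Set.mem_singleton q
    simpa using this

/-- The global inverse of a bijective C² map with uniformly invertible derivative is C² and
Lipschitz with the bound on the inverse derivatives. -/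
lemma inv_reg (f : Ed d → Ed d) {Cσ : ℝ} (hCσ : 0 < Cσ) (hf : ContDiff ℝ 2 f)
    (hjac : ∀ y, ∃ L : Ed d ≃L[ℝ] Ed d,
      (L : Ed d →L[ℝ] Ed d) = fderiv ℝ f y ∧ ‖(L.symm : Ed d →L[ℝ] Ed d)‖ ≤ Cσ)
    (hbij : Function.Bijective f) :
    ContDiff ℝ 2 (Function.invFun f) ∧
      ∀ z₁ z₂, ‖Function.invFun f z₁ - Function.invFun f z₂‖ ≤ Cσ * ‖z₁ - z₂‖ := by
  classical
  set g := Function.invFun f with hg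
  have hli : Function.LeftInverse g f := Function.leftInverse_invFun hbij.1
  have hri : Function.RightInverse g f := Function.rightInverse_invFun hbij.2
  choose L hLn hLs using fun a => hsfd_at f hf hjac a
  have key : ∀ z, ContDiffAt ℝ 2 g z ∧
      HasStrictFDerivAt g (((L (g z)).symm : Ed d →L[ℝ] Ed d)) z := by
    intro z
    set a := g z with ha
    have hfa : f a = z := hri z
    have h1 : ContDiffAt ℝ 2 f a := hf.contDiffAt
    have h2 : HasFDerivAt f ((L a : Ed d →L[ℝ] Ed d)) a := (hLs a).hasFDerivAt
    have hstrict : HasStrictFDerivAt f ((L a : Ed d →L[ℝ] Ed d)) a :=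
      h1.hasStrictFDerivAt' h2 (by norm_num)
    have hev : ∀ᶠ w in 𝓝 (f a), f (hstrict.localInverse f (L a) a w) = w :=
      hstrict.eventually_right_inverse
    have heq : ∀ᶠ w in 𝓝 (f a), g w = hstrict.localInverse f (L a) a w := by
      filter_upwards [hev] with w hw
      conv_lhs => rw [← hw]
      rw [hli _]
    have heq' : g =ᶠ[𝓝 z] hstrict.localInverse f (L a) a := by rw [hfa] at heq; exact heq
    constructor
    · have hcd : ContDiffAt ℝ 2 (h1.localInverse h2 (by norm_num)) (f a) :=
        h1.to_localInverse h2 (by norm_num)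
      have hcd' : ContDiffAt ℝ 2 (hstrict.localInverse f (L a) a) (f a) := hcd
      rw [hfa] at hcd'
      exact hcd'.congr_of_eventuallyEq heq'
    · have hs := hstrict.to_localInverse
      rw [hfa] at hs
      exact hs.congr_of_eventuallyEq heq'.symm
  have hcd : ContDiff ℝ 2 g := contDiff_iff_contDiffAt.mpr fun z => (key z).1
  have hdiff : Differentiable ℝ g := hcd.differentiable (by norm_num)
  have hfd : ∀ z, fderiv ℝ g z = (((L (g z)).symm : Ed d →L[ℝ] Ed d)) := fun z =>
    (key z).2.hasFDerivAt.fderiv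
  have hlip : LipschitzWith Cσ.toNNReal g := by
    apply lipschitzWith_of_nnnorm_fderiv_le hdiff
    intro z
    rw [← NNReal.coe_le_coe, coe_nnnorm, Real.coe_toNNReal _ hCσ.le, hfd z]
    exact hLn (g z)
  refine ⟨hcd, fun z₁ z₂ => ?_⟩
  have h := hlip.dist_le_mul z₁ z₂
  rw [dist_eq_norm, dist_eq_norm, Real.coe_toNNReal _ hCσ.le] at h
  exact h

end Aux

/-- Under Assumption (σ), for every `x` the map `y ↦ σ x y` is a
C²-diffeomorphism of ℝ^d onto ℝ^d; its inverse `τ` satisfies the two-sided growth bound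
with constant `‖φ‖_∞`, a Lipschitz-in-`x` bound, and inherits 1-periodicity in `x`. -/
theorem statement0 (d : ℕ) (hd : 1 ≤ d) (σ : Ed d → Ed d → Ed d) (Cσ : ℝ) (φ : Ed d → ℝ)
    (hσ : SigmaHyp d σ Cσ φ) :
    ∃ τ : Ed d → Ed d → Ed d,
      (∀ x, Function.Bijective (σ x) ∧
        Function.LeftInverse (τ x) (σ x) ∧ Function.RightInverse (τ x) (σ x) ∧
        ContDiff ℝ 2 (σ x) ∧ ContDiff ℝ 2 (τ x)) ∧
      (∀ x z, (⨆ x', φ x')⁻¹ * ‖z‖ ≤ ‖τ x z‖ ∧ ‖τ x z‖ ≤ (⨆ x', φ x') * ‖z‖) ∧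
      (∃ C > (0 : ℝ), ∀ x₁ x₂ z, ‖τ x₁ z - τ x₂ z‖ ≤ C * ‖x₁ - x₂‖ * ‖z‖) ∧
      ((∀ y, IsPeriodic (fun x => σ x y)) → ∀ z, IsPeriodic (fun x => τ x z)) := by
  classical
  set S := ⨆ x', φ x' with hSdef
  have hbddA : BddAbove (Set.range φ) := by
    obtain ⟨M, hM⟩ := hσ.phi_bdd
    refine ⟨M, ?_⟩
    rintro v ⟨x, rfl⟩
    exact hM x
  have hle : ∀ x, φ x ≤ S := fun x => le_ciSup hbddA x
  have hSpos : 0 < S := lt_of_lt_of_le (hσ.phi_pos 0) (hle 0)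
  have hzero : ∀ x, σ x 0 = 0 := by
    intro x
    have h := hσ.odd x 0
    rw [neg_zero] at h
    have h2 : (2 : ℝ) • σ x 0 = 0 := by
      rw [two_smul]; nth_rewrite 2 [h]; exact add_neg_cancel _
    exact (smul_eq_zero.mp h2).resolve_left (by norm_num)
  have hbij : ∀ x, Function.Bijective (σ x) := fun x =>
    bijective_aux (σ x) (hσ.smooth x) (hσ.jacobian x) (inv_pos.mpr (hσ.phi_pos x))
      (hσ.growth_lower x) (hzero x)
  set τ : Ed d → Ed d → Ed d := fun x => Function.invFun (σ x) with hτ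
  have hli : ∀ x, Function.LeftInverse (τ x) (σ x) := fun x =>
    Function.leftInverse_invFun (hbij x).1
  have hri : ∀ x, Function.RightInverse (τ x) (σ x) := fun x =>
    Function.rightInverse_invFun (hbij x).2
  have hreg : ∀ x, ContDiff ℝ 2 (τ x) ∧
      ∀ z₁ z₂, ‖τ x z₁ - τ x z₂‖ ≤ Cσ * ‖z₁ - z₂‖ :=
    fun x => inv_reg (σ x) hσ.hC (hσ.smooth x) (hσ.jacobian x) (hbij x)
  have hup : ∀ x z, ‖τ x z‖ ≤ S * ‖z‖ := by
    intro x z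
    have hz : σ x (τ x z) = z := hri x z
    have h1 : (φ x)⁻¹ * ‖τ x z‖ ≤ ‖z‖ := by
      have := hσ.growth_lower x (τ x z); rwa [hz] at this
    have h2 : ‖τ x z‖ ≤ φ x * ‖z‖ := (inv_mul_le_iff₀ (hσ.phi_pos x)).mp h1
    exact h2.trans (mul_le_mul_of_nonneg_right (hle x) (norm_nonneg _))
  have hlo : ∀ x z, S⁻¹ * ‖z‖ ≤ ‖τ x z‖ := by
    intro x z
    have hz : σ x (τ x z) = z := hri x z
    have h1 : ‖z‖ ≤ φ x * ‖τ x z‖ := by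
      have := hσ.growth_upper x (τ x z); rwa [hz] at this
    have h2 : ‖z‖ ≤ S * ‖τ x z‖ :=
      h1.trans (mul_le_mul_of_nonneg_right (hle x) (norm_nonneg _))
    rw [inv_mul_le_iff₀ hSpos]
    exact h2
  refine ⟨τ, fun x => ⟨hbij x, hli x, hri x, hσ.smooth x, (hreg x).1⟩,
    fun x z => ⟨hlo x z, hup x z⟩, ⟨Cσ * Cσ * S, mul_pos (mul_pos hσ.hC hσ.hC) hSpos, ?_⟩, ?_⟩
  · intro x₁ x₂ z
    have hy₁ : σ x₁ (τ x₁ z) = z := hri x₁ z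
    have hy₂ : σ x₂ (τ x₂ z) = z := hri x₂ z
    have hstep : ‖τ x₁ z - τ x₂ z‖ ≤ Cσ * ‖σ x₁ (τ x₁ z) - σ x₁ (τ x₂ z)‖ := by
      have h := (hreg x₁).2 (σ x₁ (τ x₁ z)) (σ x₁ (τ x₂ z))
      rwa [hli x₁ (τ x₁ z), hli x₁ (τ x₂ z)] at h
    have hsub : σ x₁ (τ x₁ z) - σ x₁ (τ x₂ z) = σ x₂ (τ x₂ z) - σ x₁ (τ x₂ z) := by
      rw [hy₁, hy₂]
    calc ‖τ x₁ z - τ x₂ z‖ ≤ Cσ * ‖σ x₂ (τ x₂ z) - σ x₁ (τ x₂ z)‖ := by rw [← hsub]; exact hstep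
      _ ≤ Cσ * (Cσ * ‖x₂ - x₁‖ * ‖τ x₂ z‖) := by
          exact mul_le_mul_of_nonneg_left (hσ.lipschitz x₂ x₁ (τ x₂ z)) hσ.hC.le
      _ ≤ Cσ * (Cσ * ‖x₂ - x₁‖ * (S * ‖z‖)) := by
          have hb := hup x₂ z
          have h0 : (0:ℝ) ≤ Cσ * ‖x₂ - x₁‖ := mul_nonneg hσ.hC.le (norm_nonneg _)
          have := mul_le_mul_of_nonneg_left hb h0
          exact mul_le_mul_of_nonneg_left (by
            calc Cσ * ‖x₂ - x₁‖ * ‖τ x₂ z‖ ≤ Cσ * ‖x₂ - x₁‖ * (S * ‖z‖) := this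
            ) hσ.hC.le
      _ = Cσ * Cσ * S * ‖x₁ - x₂‖ * ‖z‖ := by rw [norm_sub_rev x₂ x₁]; ring
  · intro hper z x k
    show τ (x + (EuclideanSpace.equiv (Fin d) ℝ).symm (fun i => (k i : ℝ))) z = τ x z
    set e := (EuclideanSpace.equiv (Fin d) ℝ).symm (fun i => ((k i : ℝ))) with he
    apply (hbij (x + e)).1
    have h1 : σ (x + e) (τ x z) = σ x (τ x z) := hper (τ x z) x k
    rw [hri (x + e) z, h1, hri x z]

end
end

section
/- Assume Assumption (σ) and let b : ℝ^d → ℝ^d be bounded measurable. Let γ ∈ (0,1) with 1+γ > α. Then for every u ∈ C_b^{1+γ}(ℝ^d) and every x ∈ ℝ^d the integral defining L^α u(x) converges absolutely, and there exists a constant C > 0, depending only on d, α, γ, ‖φ‖_∞ and ‖b‖₀, such that sup_{x∈ℝ^d} |L^α u(x)| ≤ C ‖u‖_{1+γ}. -/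
open MeasureTheory Metric

noncomputable section

/-- The nonlocal operator
`L^α u(x) = ∫_{ℝ^d∖{0}} [u(x+σ(x,y)) − u(x) − 1_B(y) σ(x,y)·∇u(x)] ν^α(dy) + b(x)·∇u(x)`. -/
def Lalpha (d : ℕ) (α : ℝ) (σ : Ed d → Ed d → Ed d) (b : Ed d → Ed d)
    (u : Ed d → ℝ) (x : Ed d) : ℝ :=
  (∫ y in {y : Ed d | y ≠ 0},
      ‖y‖ ^ (-((d : ℝ) + α)) •
        (u (x + σ x y) - u x -
          Set.indicator (ball (0 : Ed d) 1) (fun y' => fderiv ℝ u x (σ x y')) y)) +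
    fderiv ℝ u x (b x)

section Aux

open Real Set Module

lemma integrableOn_norm_rpow_ball {E : Type*} [NormedAddCommGroup E] [NormedSpace ℝ E]
    [MeasurableSpace E] [BorelSpace E] [FiniteDimensional ℝ E]
    (μ : Measure E) [μ.IsAddHaarMeasure] {s : ℝ}
    (hs : -(finrank ℝ E : ℝ) < s) (hs0 : s < 0) :
    IntegrableOn (fun y : E => ‖y‖ ^ s) (ball (0 : E) 1) μ := by
  have hmeas : Measurable (fun y : E => ‖y‖ ^ s) := by fun_prop
  refine ⟨hmeas.aestronglyMeasurable, ?_⟩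
  have hnn : ∀ y : E, 0 ≤ ‖y‖ ^ s := fun y => Real.rpow_nonneg (norm_nonneg _) _
  rw [HasFiniteIntegral, lintegral_enorm_of_nonneg hnn,
    lintegral_eq_lintegral_meas_le _ (Filter.Eventually.of_forall hnn) hmeas.aemeasurable]
  set ν := μ.restrict (ball (0 : E) 1) with hν
  have hIoc : (∫⁻ t in Ioc (0:ℝ) 1, ν {a | t ≤ ‖a‖ ^ s}) < ⊤ := by
    calc (∫⁻ t in Ioc (0:ℝ) 1, ν {a | t ≤ ‖a‖ ^ s})
        ≤ ∫⁻ _ in Ioc (0:ℝ) 1, μ (ball (0:E) 1) := by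
          refine setLIntegral_mono' measurableSet_Ioc fun t _ => ?_
          calc ν {a | t ≤ ‖a‖ ^ s} ≤ ν univ := measure_mono (subset_univ _)
            _ = μ (ball (0:E) 1) := by rw [hν, Measure.restrict_apply_univ]
      _ = μ (ball (0:E) 1) * volume (Ioc (0:ℝ) 1) := setLIntegral_const _ _
      _ < ⊤ := ENNReal.mul_lt_top measure_ball_lt_top (by simp)
  have hIoi : (∫⁻ t in Ioi (1:ℝ), ν {a | t ≤ ‖a‖ ^ s}) < ⊤ := by
    have he : (finrank ℝ E : ℝ) / s < -1 := by
      rw [div_lt_iff_of_neg hs0]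
      linarith
    calc (∫⁻ t in Ioi (1:ℝ), ν {a | t ≤ ‖a‖ ^ s})
        ≤ ∫⁻ t in Ioi (1:ℝ), ENNReal.ofReal (t ^ ((finrank ℝ E : ℝ) / s)) * μ (ball (0:E) 1) := by
          refine setLIntegral_mono' measurableSet_Ioi fun t ht => ?_
          have ht0 : (0:ℝ) < t := lt_trans zero_lt_one ht
          have hsub : {a : E | t ≤ ‖a‖ ^ s} ⊆ closedBall (0:E) (t ^ s⁻¹) := by
            intro a ha
            simp only [Set.mem_setOf_eq] at ha
            have hna : 0 ≤ ‖a‖ := norm_nonneg a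
            rcases eq_or_lt_of_le hna with h | h
            · exfalso
              rw [← h, Real.zero_rpow hs0.ne] at ha
              linarith
            have h2 := Real.rpow_le_rpow_of_nonpos ht0 ha (inv_nonpos.mpr hs0.le)
            rw [Real.rpow_rpow_inv hna hs0.ne] at h2
            exact mem_closedBall_zero_iff.mpr h2
          calc ν {a | t ≤ ‖a‖ ^ s} ≤ μ (closedBall (0:E) (t ^ s⁻¹)) :=
              le_trans (Measure.restrict_apply_le _ _) (measure_mono hsub)
            _ = ENNReal.ofReal ((t ^ s⁻¹) ^ finrank ℝ E) * μ (ball (0:E) 1) :=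
              μ.addHaar_closedBall _ (Real.rpow_nonneg ht0.le _)
            _ = _ := by
              rw [← Real.rpow_natCast (t ^ s⁻¹), ← Real.rpow_mul ht0.le]
              rw [div_eq_inv_mul]
      _ = (∫⁻ t in Ioi (1:ℝ), ENNReal.ofReal (t ^ ((finrank ℝ E : ℝ) / s))) * μ (ball (0:E) 1) :=
        lintegral_mul_const' _ _ measure_ball_lt_top.ne
      _ < ⊤ := ENNReal.mul_lt_top
          ((integrableOn_Ioi_rpow_of_lt he zero_lt_one).lintegral_lt_top) measure_ball_lt_top
  calc (∫⁻ t in Ioi (0:ℝ), ν {a | t ≤ ‖a‖ ^ s})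
      ≤ ∫⁻ t in Ioc (0:ℝ) 1 ∪ Ioi 1, ν {a | t ≤ ‖a‖ ^ s} :=
        lintegral_mono_set Ioi_subset_Ioc_union_Ioi
    _ ≤ (∫⁻ t in Ioc (0:ℝ) 1, ν {a | t ≤ ‖a‖ ^ s}) + ∫⁻ t in Ioi (1:ℝ), ν {a | t ≤ ‖a‖ ^ s} :=
        lintegral_union_le _ _ _
    _ < ⊤ := ENNReal.add_lt_top.2 ⟨hIoc, hIoi⟩

lemma hSemi_nonneg' {d : ℕ} {F : Type*} [NormedAddCommGroup F] (θ : ℝ) (f : Ed d → F) :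
    0 ≤ hSemi θ f :=
  Real.sInf_nonneg fun _ hM => hM.1

lemma hSemi_spec' {d : ℕ} {F : Type*} [NormedAddCommGroup F] {θ : ℝ} {f : Ed d → F}
    (hθ : 0 < θ)
    (h : ∃ M, 0 ≤ M ∧ ∀ x y, ‖f x - f y‖ ≤ M * ‖x - y‖ ^ θ) :
    ∀ x y, ‖f x - f y‖ ≤ hSemi θ f * ‖x - y‖ ^ θ := by
  intro x y
  by_cases hxy : x = y
  · simp [hxy, Real.zero_rpow hθ.ne']
  have hc : 0 < ‖x - y‖ ^ θ :=
    Real.rpow_pos_of_pos (norm_pos_iff.mpr (sub_ne_zero.mpr hxy)) _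
  refine le_of_forall_pos_le_add fun ε hε => ?_
  obtain ⟨M, hMmem, hMlt⟩ :=
    Real.lt_sInf_add_pos (s := {M | 0 ≤ M ∧ ∀ x y, ‖f x - f y‖ ≤ M * ‖x - y‖ ^ θ})
      ⟨_, h.choose_spec.1, h.choose_spec.2⟩ (div_pos hε hc)
  calc ‖f x - f y‖ ≤ M * ‖x - y‖ ^ θ := hMmem.2 x y
    _ ≤ (hSemi θ f + ε / ‖x - y‖ ^ θ) * ‖x - y‖ ^ θ :=
        mul_le_mul_of_nonneg_right hMlt.le hc.le
    _ = hSemi θ f * ‖x - y‖ ^ θ + ε := by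
        field_simp

lemma norm_le_supNorm' {d : ℕ} {F : Type*} [NormedAddCommGroup F] {f : Ed d → F}
    (h : ∃ M, ∀ x, ‖f x‖ ≤ M) (x : Ed d) : ‖f x‖ ≤ supNorm f := by
  obtain ⟨M, hM⟩ := h
  exact le_ciSup ⟨M, by rintro r ⟨z, rfl⟩; exact hM z⟩ x

lemma supNorm_nonneg' {d : ℕ} {F : Type*} [NormedAddCommGroup F] {f : Ed d → F}
    (h : ∃ M, ∀ x, ‖f x‖ ≤ M) : 0 ≤ supNorm f :=
  le_trans (norm_nonneg (f 0)) (norm_le_supNorm' h 0)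

lemma taylor_bound' {d : ℕ} {u : Ed d → ℝ} (hu : ContDiff ℝ 1 u) {H γ : ℝ}
    (hH : ∀ x y, ‖fderiv ℝ u x - fderiv ℝ u y‖ ≤ H * ‖x - y‖ ^ γ)
    (hγ : 0 < γ) (hHnn : 0 ≤ H) (x v : Ed d) :
    ‖u (x + v) - u x - fderiv ℝ u x v‖ ≤ (H * ‖v‖ ^ γ) * ‖v‖ := by
  have hseg : Convex ℝ (segment ℝ x (x + v)) := convex_segment _ _
  have hb : ∀ z ∈ segment ℝ x (x + v), ‖fderiv ℝ u z - fderiv ℝ u x‖ ≤ H * ‖v‖ ^ γ := by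
    intro z hz
    obtain ⟨a, c, ha, hc', hac, rfl⟩ := hz
    have hzx : a • x + c • (x + v) - x = c • v := by
      rw [smul_add, ← add_assoc, ← add_smul, hac, one_smul]
      abel
    have hle : ‖a • x + c • (x + v) - x‖ ≤ ‖v‖ := by
      rw [hzx, norm_smul, Real.norm_eq_abs, abs_of_nonneg hc']
      nlinarith [norm_nonneg v]
    calc ‖fderiv ℝ u (a • x + c • (x + v)) - fderiv ℝ u x‖
        ≤ H * ‖a • x + c • (x + v) - x‖ ^ γ := hH _ _
      _ ≤ H * ‖v‖ ^ γ :=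
          mul_le_mul_of_nonneg_left (Real.rpow_le_rpow (norm_nonneg _) hle hγ.le) hHnn
  have := hseg.norm_image_sub_le_of_norm_fderiv_le'
    (fun z _ => hu.differentiable one_ne_zero z) hb
    (left_mem_segment ℝ x (x + v)) (right_mem_segment ℝ x (x + v))
  simpa using this

end Aux

/-- under Assumption (σ), for bounded measurable `b` and `u ∈ C_b^{1+γ}` with
`1+γ > α`, the integral defining `L^α u(x)` converges absolutely for every `x`, and
`sup_x |L^α u(x)| ≤ C ‖u‖_{1+γ}` for a constant `C > 0`. -/
theorem statement8 (d : ℕ) (hd : 1 ≤ d) (α : ℝ) (hα : 1 < α ∧ α < 2)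
    (σ : Ed d → Ed d → Ed d) (Cσ : ℝ) (φ : Ed d → ℝ) (hσ : SigmaHyp d σ Cσ φ)
    (b : Ed d → Ed d) (hbmeas : Measurable b) (hbbdd : ∃ M, ∀ x, ‖b x‖ ≤ M)
    (γ : ℝ) (hγ : 0 < γ ∧ γ < 1) (hγα : α < 1 + γ) :
    ∀ u : Ed d → ℝ, ContDiff ℝ 1 u → (∃ M, ∀ x, |u x| ≤ M) →
      (∃ M, ∀ x, ‖fderiv ℝ u x‖ ≤ M) →
      (∃ M, 0 ≤ M ∧ ∀ x y, ‖fderiv ℝ u x - fderiv ℝ u y‖ ≤ M * ‖x - y‖ ^ γ) →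
      (∀ x : Ed d, IntegrableOn
        (fun y : Ed d => ‖y‖ ^ (-((d : ℝ) + α)) •
          (u (x + σ x y) - u x -
            Set.indicator (ball (0 : Ed d) 1) (fun y' => fderiv ℝ u x (σ x y')) y))
        {y : Ed d | y ≠ 0} volume) ∧
      ∃ C > (0 : ℝ), ∀ x : Ed d,
        |Lalpha d α σ b u x| ≤
          C * (supNorm u + supNorm (fun x' => fderiv ℝ u x') +
            hSemi γ (fun x' => fderiv ℝ u x')) := by
  intro u hu hMu hMd hHol
  classical
  obtain ⟨hα1, hα2⟩ := hα
  obtain ⟨hγ1, hγ2⟩ := hγ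
  obtain ⟨Mφ, hMφ⟩ := hσ.phi_bdd
  obtain ⟨Mb, hMb⟩ := hbbdd
  have hd1 : (1:ℝ) ≤ (d:ℝ) := by exact_mod_cast hd
  have hMφ0 : 0 < Mφ := lt_of_lt_of_le (hσ.phi_pos 0) (hMφ 0)
  have hMb0 : 0 ≤ Mb := le_trans (norm_nonneg (b 0)) (hMb 0)
  have hfr : (Module.finrank ℝ (Ed d) : ℝ) = (d:ℝ) := by
    rw [finrank_euclideanSpace_fin]
  set s : ℝ := 1 + γ - ((d:ℝ) + α) with hsdef
  have hs : -(d:ℝ) < s := by rw [hsdef]; linarith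
  have hs0 : s < 0 := by rw [hsdef]; linarith
  set Su := supNorm u with hSudef
  set Sd := supNorm (fun x' => fderiv ℝ u x') with hSddef
  set H := hSemi γ (fun x' => fderiv ℝ u x') with hHdef
  have hSu : ∀ z, |u z| ≤ Su := fun z => by
    simpa [Real.norm_eq_abs] using
      norm_le_supNorm' (f := u) (by simpa [Real.norm_eq_abs] using hMu) z
  have hSd : ∀ z, ‖fderiv ℝ u z‖ ≤ Sd := fun z =>
    norm_le_supNorm' (f := fun x' => fderiv ℝ u x') hMd z
  have hH : ∀ z w, ‖fderiv ℝ u z - fderiv ℝ u w‖ ≤ H * ‖z - w‖ ^ γ :=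
    hSemi_spec' hγ1 hHol
  have hH0 : 0 ≤ H := hSemi_nonneg' _ _
  have hSu0 : 0 ≤ Su :=
    le_trans (abs_nonneg (u 0)) (hSu 0)
  have hSd0 : 0 ≤ Sd := le_trans (norm_nonneg _) (hSd 0)
  -- integrable reference functions, independent of x
  have hint_ball : IntegrableOn (fun y : Ed d => ‖y‖ ^ s) (ball (0:Ed d) 1) volume :=
    integrableOn_norm_rpow_ball volume (by rw [hfr]; exact hs) hs0
  have hq0 : (0:ℝ) < (d:ℝ) + α := by linarith
  have hjap : Integrable (fun y : Ed d => (1 + ‖y‖) ^ (-((d:ℝ) + α))) volume :=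
    integrable_one_add_norm (by rw [finrank_euclideanSpace_fin]; linarith)
  have hcomp_bound : ∀ y : Ed d, y ∈ (ball (0:Ed d) 1)ᶜ →
      ‖y‖ ^ (-((d:ℝ) + α)) ≤ 2 ^ ((d:ℝ) + α) * (1 + ‖y‖) ^ (-((d:ℝ) + α)) := by
    intro y hy
    have h1 : (1:ℝ) ≤ ‖y‖ := by
      by_contra h
      exact hy (mem_ball_zero_iff.mpr (lt_of_not_ge h))
    have hy0 : (0:ℝ) < ‖y‖ := lt_of_lt_of_le zero_lt_one h1
    have h2 : (1 + ‖y‖) ^ ((d:ℝ) + α) ≤ 2 ^ ((d:ℝ) + α) * ‖y‖ ^ ((d:ℝ) + α) := by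
      rw [← Real.mul_rpow (by norm_num) (norm_nonneg y)]
      exact Real.rpow_le_rpow (by linarith) (by linarith) hq0.le
    have h3 : 0 < ‖y‖ ^ ((d:ℝ) + α) := Real.rpow_pos_of_pos hy0 _
    have h4 : 0 < (1 + ‖y‖) ^ ((d:ℝ) + α) := Real.rpow_pos_of_pos (by linarith) _
    rw [Real.rpow_neg (norm_nonneg y), Real.rpow_neg (by linarith : (0:ℝ) ≤ 1 + ‖y‖)]
    calc (‖y‖ ^ ((d:ℝ) + α))⁻¹
        ≤ ((1 + ‖y‖) ^ ((d:ℝ) + α) / 2 ^ ((d:ℝ) + α))⁻¹ := by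
          apply inv_anti₀
          · positivity
          · rw [div_le_iff₀ (by positivity : (0:ℝ) < 2 ^ ((d:ℝ)+α))]
            linarith [h2]
      _ = 2 ^ ((d:ℝ) + α) * ((1 + ‖y‖) ^ ((d:ℝ) + α))⁻¹ := by
          rw [inv_div, div_eq_mul_inv]
  have hint_compl : IntegrableOn (fun y : Ed d => ‖y‖ ^ (-((d:ℝ) + α)))
      (ball (0:Ed d) 1)ᶜ volume := by
    refine Integrable.mono'
      (((hjap.const_mul (2 ^ ((d:ℝ) + α))).integrableOn :
        IntegrableOn _ (ball (0:Ed d) 1)ᶜ volume))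
      (by fun_prop : Measurable fun y : Ed d => ‖y‖ ^ (-((d:ℝ) + α))).aestronglyMeasurable
      ?_
    refine (ae_restrict_iff' measurableSet_ball.compl).2 (Filter.Eventually.of_forall ?_)
    intro y hy
    rw [Real.norm_eq_abs, abs_of_nonneg (Real.rpow_nonneg (norm_nonneg y) _)]
    exact hcomp_bound y hy
  set I1 : ℝ := ∫ y in ball (0:Ed d) 1 \ {0}, ‖y‖ ^ s with hI1def
  set I2 : ℝ := ∫ y in (ball (0:Ed d) 1)ᶜ, ‖y‖ ^ (-((d:ℝ) + α)) with hI2def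
  have hI1 : 0 ≤ I1 :=
    setIntegral_nonneg (measurableSet_ball.diff (measurableSet_singleton 0))
      fun y _ => Real.rpow_nonneg (norm_nonneg y) _
  have hI2 : 0 ≤ I2 :=
    setIntegral_nonneg measurableSet_ball.compl
      fun y _ => Real.rpow_nonneg (norm_nonneg y) _
  -- the integrand
  set F : Ed d → Ed d → ℝ := fun x y => ‖y‖ ^ (-((d : ℝ) + α)) •
      (u (x + σ x y) - u x -
        Set.indicator (ball (0 : Ed d) 1) (fun y' => fderiv ℝ u x (σ x y')) y) with hFdef
  have hFmeas : ∀ x : Ed d, Measurable (F x) := by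
    intro x
    have hσc : Continuous (σ x) := (hσ.smooth x).continuous
    have h1 : Measurable fun y : Ed d => ‖y‖ ^ (-((d:ℝ) + α)) := by fun_prop
    have h2 : Measurable fun y : Ed d => u (x + σ x y) - u x :=
      ((hu.continuous.comp (continuous_const.add hσc)).measurable).sub measurable_const
    have h3 : Measurable (Set.indicator (ball (0:Ed d) 1)
        (fun y' => fderiv ℝ u x (σ x y'))) :=
      Measurable.indicator ((fderiv ℝ u x).continuous.comp hσc).measurable measurableSet_ball
    exact h1.smul (h2.sub h3)
  have hbd1 : ∀ x : Ed d, ∀ y ∈ ball (0:Ed d) 1 \ {0},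
      ‖F x y‖ ≤ (H * (Mφ ^ γ * Mφ)) * ‖y‖ ^ s := by
    intro x y hy
    obtain ⟨hy1, hy2⟩ := hy
    have hy0 : (0:ℝ) < ‖y‖ := norm_pos_iff.mpr (by simpa using hy2)
    have hv : ‖σ x y‖ ≤ Mφ * ‖y‖ :=
      le_trans (hσ.growth_upper x y) (mul_le_mul_of_nonneg_right (hMφ x) (norm_nonneg y))
    have hvγ : ‖σ x y‖ ^ γ ≤ Mφ ^ γ * ‖y‖ ^ γ := by
      rw [← Real.mul_rpow hMφ0.le (norm_nonneg y)]
      exact Real.rpow_le_rpow (norm_nonneg _) hv hγ1.le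
    have htay := taylor_bound' hu hH hγ1 hH0 x (σ x y)
    rw [hFdef]
    simp only
    rw [Set.indicator_of_mem hy1, norm_smul, Real.norm_eq_abs,
      abs_of_nonneg (Real.rpow_nonneg (norm_nonneg y) _)]
    have hA : (0:ℝ) ≤ ‖y‖ ^ (-((d:ℝ) + α)) := Real.rpow_nonneg (norm_nonneg y) _
    calc ‖y‖ ^ (-((d:ℝ) + α)) * ‖u (x + σ x y) - u x - (fderiv ℝ u x) (σ x y)‖
        ≤ ‖y‖ ^ (-((d:ℝ) + α)) * ((H * ‖σ x y‖ ^ γ) * ‖σ x y‖) :=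
          mul_le_mul_of_nonneg_left htay hA
      _ ≤ ‖y‖ ^ (-((d:ℝ) + α)) * ((H * (Mφ ^ γ * ‖y‖ ^ γ)) * (Mφ * ‖y‖)) := by
          refine mul_le_mul_of_nonneg_left ?_ hA
          refine mul_le_mul (mul_le_mul_of_nonneg_left hvγ hH0) hv (norm_nonneg _) ?_
          have : (0:ℝ) ≤ Mφ ^ γ * ‖y‖ ^ γ := by positivity
          exact mul_nonneg hH0 this
      _ = (H * (Mφ ^ γ * Mφ)) * (‖y‖ ^ (-((d:ℝ) + α)) * ‖y‖ ^ γ * ‖y‖ ^ (1:ℝ)) := by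
          rw [Real.rpow_one]; ring
      _ = (H * (Mφ ^ γ * Mφ)) * ‖y‖ ^ s := by
          rw [← Real.rpow_add hy0, ← Real.rpow_add hy0]
          congr 1
          rw [hsdef]; ring
  have hbd2 : ∀ x : Ed d, ∀ y ∈ (ball (0:Ed d) 1)ᶜ,
      ‖F x y‖ ≤ (2 * Su) * ‖y‖ ^ (-((d:ℝ) + α)) := by
    intro x y hy
    rw [hFdef]
    simp only
    rw [Set.indicator_of_notMem hy, sub_zero, norm_smul, Real.norm_eq_abs,
      abs_of_nonneg (Real.rpow_nonneg (norm_nonneg y) _)]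
    have hb' : ‖u (x + σ x y) - u x‖ ≤ 2 * Su := by
      calc ‖u (x + σ x y) - u x‖ ≤ ‖u (x + σ x y)‖ + ‖u x‖ := norm_sub_le _ _
        _ ≤ Su + Su := by
            rw [Real.norm_eq_abs, Real.norm_eq_abs]
            exact add_le_add (hSu _) (hSu _)
        _ = 2 * Su := by ring
    calc ‖y‖ ^ (-((d:ℝ) + α)) * ‖u (x + σ x y) - u x‖
        ≤ ‖y‖ ^ (-((d:ℝ) + α)) * (2 * Su) :=
          mul_le_mul_of_nonneg_left hb' (Real.rpow_nonneg (norm_nonneg y) _)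
      _ = (2 * Su) * ‖y‖ ^ (-((d:ℝ) + α)) := by ring
  have hintS1 : ∀ x : Ed d, IntegrableOn (F x) (ball (0:Ed d) 1 \ {0}) volume := by
    intro x
    refine Integrable.mono'
      ((IntegrableOn.mono_set (hint_ball.const_mul (H * (Mφ ^ γ * Mφ))) Set.diff_subset))
      (hFmeas x).aestronglyMeasurable.restrict ?_
    exact (ae_restrict_iff' (measurableSet_ball.diff (measurableSet_singleton 0))).2
      (Filter.Eventually.of_forall (hbd1 x))
  have hintS2 : ∀ x : Ed d, IntegrableOn (F x) (ball (0:Ed d) 1)ᶜ volume := by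
    intro x
    refine Integrable.mono' (hint_compl.const_mul (2 * Su))
      (hFmeas x).aestronglyMeasurable.restrict ?_
    exact (ae_restrict_iff' measurableSet_ball.compl).2
      (Filter.Eventually.of_forall (hbd2 x))
  have hset : {y : Ed d | y ≠ 0} = (ball (0:Ed d) 1 \ {0}) ∪ (ball (0:Ed d) 1)ᶜ := by
    ext y
    constructor
    · intro hy
      by_cases h : y ∈ ball (0:Ed d) 1
      · exact Or.inl ⟨h, hy⟩
      · exact Or.inr h
    · rintro (⟨_, hy⟩ | hy)
      · simpa using hy
      · intro h0
        exact hy (by simp [h0, mem_ball_self (zero_lt_one)])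
  have hintF : ∀ x : Ed d, IntegrableOn (F x) {y : Ed d | y ≠ 0} volume := by
    intro x
    rw [hset]
    exact (hintS1 x).union (hintS2 x)
  refine ⟨hintF, ?_⟩
  refine ⟨(Mφ ^ γ * Mφ) * I1 + 2 * I2 + Mb + 1, ?_, ?_⟩
  · have : (0:ℝ) ≤ (Mφ ^ γ * Mφ) * I1 := mul_nonneg (by positivity) hI1
    linarith
  intro x
  have hdisj : Disjoint (ball (0:Ed d) 1 \ {0}) (ball (0:Ed d) 1)ᶜ :=
    disjoint_compl_right.mono_left Set.diff_subset
  have hsplit : (∫ y in {y : Ed d | y ≠ 0}, F x y) =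
      (∫ y in ball (0:Ed d) 1 \ {0}, F x y) + ∫ y in (ball (0:Ed d) 1)ᶜ, F x y := by
    rw [hset]
    exact setIntegral_union hdisj measurableSet_ball.compl (hintS1 x) (hintS2 x)
  have hterm1 : |∫ y in ball (0:Ed d) 1 \ {0}, F x y| ≤ H * ((Mφ ^ γ * Mφ) * I1) := by
    calc |∫ y in ball (0:Ed d) 1 \ {0}, F x y|
        ≤ ∫ y in ball (0:Ed d) 1 \ {0}, ‖F x y‖ := by
          rw [← Real.norm_eq_abs]
          exact norm_integral_le_integral_norm _
      _ ≤ ∫ y in ball (0:Ed d) 1 \ {0}, (H * (Mφ ^ γ * Mφ)) * ‖y‖ ^ s := by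
          refine setIntegral_mono_on (hintS1 x).norm
            (IntegrableOn.mono_set (hint_ball.const_mul (H * (Mφ ^ γ * Mφ))) Set.diff_subset)
            (measurableSet_ball.diff (measurableSet_singleton 0)) (hbd1 x)
      _ = (H * (Mφ ^ γ * Mφ)) * I1 := by
          rw [hI1def, integral_const_mul]
      _ = H * ((Mφ ^ γ * Mφ) * I1) := by ring
  have hterm2 : |∫ y in (ball (0:Ed d) 1)ᶜ, F x y| ≤ Su * (2 * I2) := by
    calc |∫ y in (ball (0:Ed d) 1)ᶜ, F x y|
        ≤ ∫ y in (ball (0:Ed d) 1)ᶜ, ‖F x y‖ := by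
          rw [← Real.norm_eq_abs]
          exact norm_integral_le_integral_norm _
      _ ≤ ∫ y in (ball (0:Ed d) 1)ᶜ, (2 * Su) * ‖y‖ ^ (-((d:ℝ) + α)) := by
          refine setIntegral_mono_on (hintS2 x).norm
            (hint_compl.const_mul (2 * Su)) measurableSet_ball.compl (hbd2 x)
      _ = (2 * Su) * I2 := by
          rw [hI2def, integral_const_mul]
      _ = Su * (2 * I2) := by ring
  have hterm3 : |fderiv ℝ u x (b x)| ≤ Sd * Mb := by
    calc |fderiv ℝ u x (b x)| = ‖fderiv ℝ u x (b x)‖ := (Real.norm_eq_abs _).symm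
      _ ≤ ‖fderiv ℝ u x‖ * ‖b x‖ := (fderiv ℝ u x).le_opNorm (b x)
      _ ≤ Sd * Mb := mul_le_mul (hSd x) (hMb x) (norm_nonneg _) hSd0
  have hLa : Lalpha d α σ b u x = (∫ y in {y : Ed d | y ≠ 0}, F x y) + fderiv ℝ u x (b x) := by
    rw [Lalpha, hFdef]
  have habs : |Lalpha d α σ b u x| ≤
      H * ((Mφ ^ γ * Mφ) * I1) + Su * (2 * I2) + Sd * Mb := by
    rw [hLa, hsplit]
    calc |(∫ y in ball (0:Ed d) 1 \ {0}, F x y) + (∫ y in (ball (0:Ed d) 1)ᶜ, F x y) +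
          fderiv ℝ u x (b x)|
        ≤ |(∫ y in ball (0:Ed d) 1 \ {0}, F x y) + (∫ y in (ball (0:Ed d) 1)ᶜ, F x y)| +
          |fderiv ℝ u x (b x)| := abs_add_le _ _
      _ ≤ |∫ y in ball (0:Ed d) 1 \ {0}, F x y| + |∫ y in (ball (0:Ed d) 1)ᶜ, F x y| +
          |fderiv ℝ u x (b x)| := by
          have := abs_add_le (∫ y in ball (0:Ed d) 1 \ {0}, F x y)
            (∫ y in (ball (0:Ed d) 1)ᶜ, F x y)
          linarith
      _ ≤ H * ((Mφ ^ γ * Mφ) * I1) + Su * (2 * I2) + Sd * Mb := by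
          linarith [hterm1, hterm2, hterm3]
  set C : ℝ := (Mφ ^ γ * Mφ) * I1 + 2 * I2 + Mb + 1 with hCdef
  have hc0 : (0:ℝ) ≤ (Mφ ^ γ * Mφ) * I1 := mul_nonneg (by positivity) hI1
  have hc1 : (Mφ ^ γ * Mφ) * I1 ≤ C := by rw [hCdef]; linarith
  have hc2 : 2 * I2 ≤ C := by rw [hCdef]; linarith
  have hc3 : Mb ≤ C := by rw [hCdef]; linarith
  have e1 : H * ((Mφ ^ γ * Mφ) * I1) ≤ C * H := by
    calc H * ((Mφ ^ γ * Mφ) * I1) ≤ H * C := mul_le_mul_of_nonneg_left hc1 hH0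
      _ = C * H := mul_comm _ _
  have e2 : Su * (2 * I2) ≤ C * Su := by
    calc Su * (2 * I2) ≤ Su * C := mul_le_mul_of_nonneg_left hc2 hSu0
      _ = C * Su := mul_comm _ _
  have e3 : Sd * Mb ≤ C * Sd := by
    calc Sd * Mb ≤ Sd * C := mul_le_mul_of_nonneg_left hc3 hSd0
      _ = C * Sd := mul_comm _ _
  calc |Lalpha d α σ b u x| ≤ H * ((Mφ ^ γ * Mφ) * I1) + Su * (2 * I2) + Sd * Mb := habs
    _ ≤ C * H + C * Su + C * Sd := by linarith
    _ = C * (Su + Sd + H) := by ring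
end
end

section
/- There exists a constant C > 0, depending only on ‖b̂‖₀, ‖∇b̂‖₀, [∇b̂]_γ, C_σ and ‖φ‖_∞, such that |σ*(x₁,y) − σ*(x₂,y)| ≤ C|x₁ − x₂|(|y|^γ + |y|) for all x₁, x₂, y ∈ ℝ^d. Consequently, if in addition 2γ > α, then there is a constant C' > 0 such that ∫_{0<|y|<1} |σ*(x₁,y) − σ*(x₂,y)|² ν^α(dy) ≤ C'|x₁ − x₂|² for all x₁, x₂ ∈ ℝ^d. -/
open MeasureTheory Metric

noncomputable section

/-- The Zvonkin-transformed coefficient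
`σ*(x,y) = b̂(Ψ(x) + σ(Ψ(x),y)) − b̂(Ψ(x)) + σ(Ψ(x),y)`. -/
def zvonkinSigma {d : ℕ} (bhat Ψ : Ed d → Ed d) (σ : Ed d → Ed d → Ed d)
    (x y : Ed d) : Ed d :=
  bhat (Ψ x + σ (Ψ x) y) - bhat (Ψ x) + σ (Ψ x) y

/-- Auxiliary: finiteness of `∫_{0<|y|<1} |y|^p dy` for `-d < p`. -/
lemma aux_finite_statement16 (d : ℕ) (hd : 1 ≤ d) (p : ℝ) (hp : -(d:ℝ) < p) (hp0 : p < 0) :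
    ∫⁻ y in {y : Ed d | 0 < ‖y‖ ∧ ‖y‖ < 1}, ENNReal.ofReal (‖y‖ ^ p) ≠ ⊤ := by
  haveI : Nonempty (Fin d) := ⟨⟨0, hd⟩⟩
  haveI : Nontrivial (Ed d) := ⟨0, EuclideanSpace.single ⟨0, hd⟩ (1:ℝ), by
    intro h
    have := congrFun (congrArg (fun v : Ed d => (v : Fin d → ℝ)) h) ⟨0, hd⟩
    simp [EuclideanSpace.single] at this⟩
  classical
  set A : ℕ → Set (Ed d) :=
    fun n => {y | (2:ℝ) ^ (-(n:ℝ)-1) ≤ ‖y‖ ∧ ‖y‖ < (2:ℝ) ^ (-(n:ℝ))} with hA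
  have hpow : ∀ n : ℕ, (2:ℝ) ^ (-(n:ℝ)) = (1/2:ℝ) ^ n := by
    intro n
    rw [Real.rpow_neg (by norm_num), Real.rpow_natCast]
    simp [one_div, inv_pow]
  have hsub : {y : Ed d | 0 < ‖y‖ ∧ ‖y‖ < 1} ⊆ ⋃ n, A n := by
    rintro y ⟨h0, h1⟩
    have hex : ∃ n : ℕ, (2:ℝ) ^ (-(n:ℝ)) ≤ ‖y‖ := by
      obtain ⟨n, hn⟩ := exists_pow_lt_of_lt_one h0 (by norm_num : (1/2:ℝ) < 1)
      exact ⟨n, by rw [hpow]; exact hn.le⟩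
    have hfind := Nat.find_spec hex
    have hne : Nat.find hex ≠ 0 := by
      intro h
      rw [h] at hfind
      simp at hfind
      linarith
    obtain ⟨m, hm⟩ := Nat.exists_eq_succ_of_ne_zero hne
    refine Set.mem_iUnion.2 ⟨m, ?_, ?_⟩
    · have he : (-(m:ℝ)-1) = -((Nat.find hex : ℕ):ℝ) := by rw [hm]; push_cast; ring
      rw [he]; exact hfind
    · have := Nat.find_min hex (by omega : m < Nat.find hex)
      exact not_le.1 this
  have hAmeas : ∀ n, MeasurableSet (A n) := by
    intro n
    have : A n = (fun y : Ed d => ‖y‖) ⁻¹'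
        (Set.Ico ((2:ℝ)^(-(n:ℝ)-1)) ((2:ℝ)^(-(n:ℝ)))) := rfl
    rw [this]
    exact measurable_norm measurableSet_Ico
  set B : ENNReal := volume (ball (0:Ed d) 1) with hB
  have hBne : B ≠ ⊤ := (measure_ball_lt_top).ne
  set c : ENNReal := ENNReal.ofReal ((2:ℝ) ^ (-(p+(d:ℝ)))) with hc
  set K : ENNReal := ENNReal.ofReal ((2:ℝ) ^ (-p)) with hK
  have hball : ∀ n, volume (A n) ≤ ENNReal.ofReal ((2:ℝ)^(-(n:ℝ)*(d:ℝ))) * B := by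
    intro n
    have h1 : A n ⊆ ball (0:Ed d) ((2:ℝ)^(-(n:ℝ))) := by
      intro y hy
      simpa [mem_ball, dist_zero_right] using hy.2
    calc volume (A n) ≤ volume (ball (0:Ed d) ((2:ℝ)^(-(n:ℝ)))) := measure_mono h1
      _ = ENNReal.ofReal (((2:ℝ)^(-(n:ℝ)))^(Module.finrank ℝ (Ed d))) * B :=
          Measure.addHaar_ball _ _ (Real.rpow_nonneg (by norm_num) _)
      _ = ENNReal.ofReal ((2:ℝ)^(-(n:ℝ)*(d:ℝ))) * B := by
          rw [finrank_euclideanSpace_fin, ← Real.rpow_natCast ((2:ℝ)^(-(n:ℝ))) d,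
            ← Real.rpow_mul (by norm_num)]
  have hterm : ∀ n, ∫⁻ y in A n, ENNReal.ofReal (‖y‖ ^ p) ≤ (K * B) * c ^ n := by
    intro n
    have hb : ∀ y ∈ A n, ENNReal.ofReal (‖y‖^p)
        ≤ ENNReal.ofReal ((2:ℝ)^((-(n:ℝ)-1)*p)) := by
      intro y hy
      apply ENNReal.ofReal_le_ofReal
      have h2 : (0:ℝ) < (2:ℝ)^(-(n:ℝ)-1) := Real.rpow_pos_of_pos (by norm_num) _
      calc ‖y‖^p ≤ ((2:ℝ)^(-(n:ℝ)-1))^p :=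
            Real.rpow_le_rpow_of_nonpos h2 hy.1 hp0.le
        _ = (2:ℝ)^((-(n:ℝ)-1)*p) := (Real.rpow_mul (by norm_num) _ _).symm
    calc ∫⁻ y in A n, ENNReal.ofReal (‖y‖^p)
        ≤ ∫⁻ _ in A n, ENNReal.ofReal ((2:ℝ)^((-(n:ℝ)-1)*p)) :=
          setLIntegral_mono measurable_const hb
      _ = ENNReal.ofReal ((2:ℝ)^((-(n:ℝ)-1)*p)) * volume (A n) := setLIntegral_const _ _
      _ ≤ ENNReal.ofReal ((2:ℝ)^((-(n:ℝ)-1)*p)) *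
            (ENNReal.ofReal ((2:ℝ)^(-(n:ℝ)*(d:ℝ))) * B) := by gcongr; exact hball n
      _ = (K * B) * c ^ n := by
          rw [← mul_assoc, ← ENNReal.ofReal_mul (Real.rpow_nonneg (by norm_num) _),
            ← Real.rpow_add (by norm_num)]
          have he : (-(n:ℝ)-1)*p + (-(n:ℝ)*(d:ℝ)) = (-p) + (-(p+(d:ℝ)))*(n:ℝ) := by ring
          rw [he, Real.rpow_add (by norm_num : (0:ℝ) < 2), Real.rpow_mul (by norm_num),
            Real.rpow_natCast, ENNReal.ofReal_mul (Real.rpow_nonneg (by norm_num) _),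
            ENNReal.ofReal_pow (Real.rpow_nonneg (by norm_num) _)]
          ring
  have hc1 : c < 1 := by
    rw [hc, ← ENNReal.ofReal_one]
    apply ENNReal.ofReal_lt_ofReal_iff_of_nonneg (Real.rpow_nonneg (by norm_num) _) |>.2
    exact Real.rpow_lt_one_of_one_lt_of_neg (by norm_num) (by linarith)
  have htot : ∫⁻ y in {y : Ed d | 0 < ‖y‖ ∧ ‖y‖ < 1}, ENNReal.ofReal (‖y‖ ^ p)
      ≤ (K * B) * (1 - c)⁻¹ := by
    calc ∫⁻ y in {y : Ed d | 0 < ‖y‖ ∧ ‖y‖ < 1}, ENNReal.ofReal (‖y‖ ^ p)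
        ≤ ∫⁻ y in ⋃ n, A n, ENNReal.ofReal (‖y‖ ^ p) := lintegral_mono_set hsub
      _ ≤ ∑' n, ∫⁻ y in A n, ENNReal.ofReal (‖y‖ ^ p) := lintegral_iUnion_le _ _
      _ ≤ ∑' n, (K * B) * c ^ n := ENNReal.tsum_le_tsum hterm
      _ = (K * B) * ∑' n, c ^ n := ENNReal.tsum_mul_left
      _ = (K * B) * (1 - c)⁻¹ := by rw [ENNReal.tsum_geometric]
  refine ne_top_of_le_ne_top ?_ htot
  refine ENNReal.mul_ne_top (ENNReal.mul_ne_top ENNReal.ofReal_ne_top hBne) ?_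
  exact ENNReal.inv_ne_top.2 (tsub_pos_of_lt hc1).ne'

/-- the Zvonkin-transformed coefficient satisfies
`|σ*(x₁,y) − σ*(x₂,y)| ≤ C|x₁−x₂|(|y|^γ + |y|)`, and if `2γ > α` then
`∫_{0<|y|<1} |σ*(x₁,y) − σ*(x₂,y)|² ν^α(dy) ≤ C'|x₁−x₂|²`. -/
theorem statement16 (d : ℕ) (hd : 1 ≤ d) (α : ℝ) (hα : 1 < α ∧ α < 2)
    (γ : ℝ) (hγ : 0 < γ ∧ γ < 1)
    (bhat : Ed d → Ed d) (hb : ContDiff ℝ 1 bhat) (hbbdd : ∃ M, ∀ x, ‖bhat x‖ ≤ M)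
    (hb1 : ∀ x, ‖fderiv ℝ bhat x‖ ≤ 1 / 2)
    (hb2 : ∃ M, 0 ≤ M ∧ ∀ x y, ‖fderiv ℝ bhat x - fderiv ℝ bhat y‖ ≤ M * ‖x - y‖ ^ γ)
    (Ψ : Ed d → Ed d)
    (hΨl : Function.LeftInverse Ψ (fun x : Ed d => x + bhat x))
    (hΨr : Function.RightInverse Ψ (fun x : Ed d => x + bhat x))
    (σ : Ed d → Ed d → Ed d) (hσmeas : Measurable (Function.uncurry σ))
    (Cσ : ℝ) (hCσ : 0 < Cσ)
    (hlip : ∀ x₁ x₂ y, ‖σ x₁ y - σ x₂ y‖ ≤ Cσ * ‖x₁ - x₂‖ * ‖y‖)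
    (φ : Ed d → ℝ) (hφmeas : Measurable φ) (hφpos : ∀ x, 0 < φ x)
    (hφbdd : ∃ M, ∀ x, φ x ≤ M)
    (hupper : ∀ x y, ‖σ x y‖ ≤ φ x * ‖y‖) :
    (∃ C > (0 : ℝ), ∀ x₁ x₂ y : Ed d,
      ‖zvonkinSigma bhat Ψ σ x₁ y - zvonkinSigma bhat Ψ σ x₂ y‖
        ≤ C * ‖x₁ - x₂‖ * (‖y‖ ^ γ + ‖y‖)) ∧
    (2 * γ > α → ∃ C' > (0 : ℝ), ∀ x₁ x₂ : Ed d,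
      ∫⁻ y in {y : Ed d | 0 < ‖y‖ ∧ ‖y‖ < 1},
          ENNReal.ofReal
            (‖zvonkinSigma bhat Ψ σ x₁ y - zvonkinSigma bhat Ψ σ x₂ y‖ ^ 2 *
              ‖y‖ ^ (-((d : ℝ) + α)))
        ≤ ENNReal.ofReal (C' * ‖x₁ - x₂‖ ^ 2)) := by
  obtain ⟨M, hM0, hM⟩ := hb2
  obtain ⟨Mφ₀, hMφ₀⟩ := hφbdd
  set Mφ : ℝ := max Mφ₀ 1 with hMφdef
  have hMφ1 : (1:ℝ) ≤ Mφ := le_max_right _ _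
  have hMφ : ∀ x, φ x ≤ Mφ := fun x => (hMφ₀ x).trans (le_max_left _ _)
  have hbdiff : Differentiable ℝ bhat := hb.differentiable one_ne_zero
  -- bhat is (1/2)-Lipschitz
  have hblip : ∀ a b : Ed d, ‖bhat a - bhat b‖ ≤ (1/2) * ‖a - b‖ := by
    intro a b
    exact Convex.norm_image_sub_le_of_norm_fderiv_le
      (fun x _ => hbdiff x) (fun x _ => hb1 x) convex_univ trivial trivial
  -- x ↦ bhat (x+s) - bhat x is (M‖s‖^γ)-Lipschitz
  have hglip : ∀ s a b : Ed d,
      ‖(bhat (a + s) - bhat a) - (bhat (b + s) - bhat b)‖ ≤ (M * ‖s‖ ^ γ) * ‖a - b‖ := by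
    intro s a b
    have hgd : ∀ x : Ed d, HasFDerivAt (fun x => bhat (x + s) - bhat x)
        (fderiv ℝ bhat (x + s) - fderiv ℝ bhat x) x := by
      intro x
      have h1 : HasFDerivAt (fun x : Ed d => bhat (x + s)) (fderiv ℝ bhat (x+s)) x := by
        have := (hbdiff (x+s)).hasFDerivAt.comp x ((hasFDerivAt_id x).add_const s)
        simpa [Function.comp_def] using this
      exact h1.sub (hbdiff x).hasFDerivAt
    exact Convex.norm_image_sub_le_of_norm_fderiv_le
      (fun x _ => (hgd x).differentiableAt)
      (fun x _ => by
        rw [(hgd x).fderiv]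
        have := hM (x+s) x
        rwa [add_sub_cancel_left] at this)
      convex_univ trivial trivial
  -- Ψ is 2-Lipschitz
  have hΨlip : ∀ x₁ x₂, ‖Ψ x₁ - Ψ x₂‖ ≤ 2 * ‖x₁ - x₂‖ := by
    intro x₁ x₂
    have e1 : Ψ x₁ + bhat (Ψ x₁) = x₁ := hΨr x₁
    have e2 : Ψ x₂ + bhat (Ψ x₂) = x₂ := hΨr x₂
    have b1 : bhat (Ψ x₁) = x₁ - Ψ x₁ := eq_sub_of_add_eq' e1
    have b2 : bhat (Ψ x₂) = x₂ - Ψ x₂ := eq_sub_of_add_eq' e2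
    have e : Ψ x₁ - Ψ x₂ = (x₁ - x₂) - (bhat (Ψ x₁) - bhat (Ψ x₂)) := by
      rw [b1, b2]; abel
    have key : ‖Ψ x₁ - Ψ x₂‖ ≤ ‖x₁ - x₂‖ + (1/2) * ‖Ψ x₁ - Ψ x₂‖ := by
      have h2 := hblip (Ψ x₁) (Ψ x₂)
      calc ‖Ψ x₁ - Ψ x₂‖ = ‖(x₁ - x₂) - (bhat (Ψ x₁) - bhat (Ψ x₂))‖ := by rw [e]
        _ ≤ ‖x₁ - x₂‖ + ‖bhat (Ψ x₁) - bhat (Ψ x₂)‖ := norm_sub_le _ _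
        _ ≤ ‖x₁ - x₂‖ + (1/2) * ‖Ψ x₁ - Ψ x₂‖ := by linarith
    linarith
  set C : ℝ := 2*M*Mφ^γ + 3*Cσ + 1 with hCdef
  have hMφγ0 : (0:ℝ) ≤ Mφ ^ γ := Real.rpow_nonneg (by linarith) _
  have hCpos : 0 < C := by positivity
  -- Part 1: the pointwise Lipschitz estimate
  have hmain : ∀ x₁ x₂ y : Ed d,
      ‖zvonkinSigma bhat Ψ σ x₁ y - zvonkinSigma bhat Ψ σ x₂ y‖
        ≤ C * ‖x₁ - x₂‖ * (‖y‖ ^ γ + ‖y‖) := by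
    intro x₁ x₂ y
    set a₁ := Ψ x₁
    set a₂ := Ψ x₂
    set s₁ := σ a₁ y
    set s₂ := σ a₂ y
    set D := ‖x₁ - x₂‖ with hD
    have hD0 : 0 ≤ D := norm_nonneg _
    have hy0 : (0:ℝ) ≤ ‖y‖ := norm_nonneg _
    have hyγ0 : (0:ℝ) ≤ ‖y‖ ^ γ := Real.rpow_nonneg hy0 _
    have haD : ‖a₁ - a₂‖ ≤ 2 * D := hΨlip x₁ x₂
    have hs12 : ‖s₁ - s₂‖ ≤ Cσ * (2*D) * ‖y‖ := by
      refine (hlip a₁ a₂ y).trans ?_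
      exact mul_le_mul_of_nonneg_right (mul_le_mul_of_nonneg_left haD hCσ.le) hy0
    have hkey : zvonkinSigma bhat Ψ σ x₁ y - zvonkinSigma bhat Ψ σ x₂ y
        = ((bhat (a₁ + s₁) - bhat a₁) - (bhat (a₂ + s₁) - bhat a₂))
          + (bhat (a₂ + s₁) - bhat (a₂ + s₂)) + (s₁ - s₂) := by
      simp only [zvonkinSigma]; abel
    have hs1γ : ‖s₁‖ ^ γ ≤ Mφ ^ γ * ‖y‖ ^ γ := by
      rw [← Real.mul_rpow (by linarith) hy0]
      refine Real.rpow_le_rpow (norm_nonneg _) ?_ hγ.1.le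
      exact (hupper a₁ y).trans (mul_le_mul_of_nonneg_right (hMφ a₁) hy0)
    have hT1 : ‖(bhat (a₁ + s₁) - bhat a₁) - (bhat (a₂ + s₁) - bhat a₂)‖
        ≤ M * (Mφ^γ * ‖y‖^γ) * (2*D) := by
      refine (hglip s₁ a₁ a₂).trans ?_
      have h1 : M * ‖s₁‖ ^ γ ≤ M * (Mφ^γ * ‖y‖^γ) := mul_le_mul_of_nonneg_left hs1γ hM0
      exact mul_le_mul h1 haD (norm_nonneg _) (by positivity)
    have hT2 : ‖bhat (a₂ + s₁) - bhat (a₂ + s₂)‖ ≤ (1/2) * (Cσ * (2*D) * ‖y‖) := by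
      refine (hblip _ _).trans ?_
      have e : a₂ + s₁ - (a₂ + s₂) = s₁ - s₂ := by abel
      rw [e]
      linarith [hs12]
    calc ‖zvonkinSigma bhat Ψ σ x₁ y - zvonkinSigma bhat Ψ σ x₂ y‖
        = ‖((bhat (a₁ + s₁) - bhat a₁) - (bhat (a₂ + s₁) - bhat a₂))
          + (bhat (a₂ + s₁) - bhat (a₂ + s₂)) + (s₁ - s₂)‖ := by rw [hkey]
      _ ≤ ‖(bhat (a₁ + s₁) - bhat a₁) - (bhat (a₂ + s₁) - bhat a₂)‖
          + ‖bhat (a₂ + s₁) - bhat (a₂ + s₂)‖ + ‖s₁ - s₂‖ := norm_add₃_le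
      _ ≤ M * (Mφ^γ * ‖y‖^γ) * (2*D) + (1/2) * (Cσ * (2*D) * ‖y‖) + Cσ * (2*D) * ‖y‖ :=
          add_le_add (add_le_add hT1 hT2) hs12
      _ ≤ C * D * (‖y‖ ^ γ + ‖y‖) := by
          rw [hCdef]
          nlinarith [mul_nonneg (mul_nonneg (mul_nonneg hM0 hMφγ0) hD0) hy0,
            mul_nonneg (mul_nonneg hCσ.le hD0) hyγ0,
            mul_nonneg (mul_nonneg hCσ.le hD0) hy0,
            mul_nonneg hD0 hyγ0, mul_nonneg hD0 hy0]
  refine ⟨⟨C, hCpos, hmain⟩, ?_⟩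
  -- Part 2: the integral estimate
  intro hαγ
  set p : ℝ := 2*γ - (d:ℝ) - α with hpdef
  have hd1 : (1:ℝ) ≤ (d:ℝ) := by exact_mod_cast hd
  have hpp : -(d:ℝ) < p := by rw [hpdef]; linarith
  have hp0 : p < 0 := by rw [hpdef]; linarith [hγ.2, hα.1]
  set I : ENNReal := ∫⁻ y in {y : Ed d | 0 < ‖y‖ ∧ ‖y‖ < 1}, ENNReal.ofReal (‖y‖ ^ p) with hI
  have hIne : I ≠ ⊤ := aux_finite_statement16 d hd p hpp hp0
  refine ⟨4*C^2*(I.toReal+1), by positivity, ?_⟩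
  intro x₁ x₂
  set D := ‖x₁ - x₂‖ with hD
  have hD0 : 0 ≤ D := norm_nonneg _
  have hptws : ∀ y ∈ {y : Ed d | 0 < ‖y‖ ∧ ‖y‖ < 1},
      ENNReal.ofReal
          (‖zvonkinSigma bhat Ψ σ x₁ y - zvonkinSigma bhat Ψ σ x₂ y‖ ^ 2 *
            ‖y‖ ^ (-((d : ℝ) + α)))
        ≤ ENNReal.ofReal (4*C^2*D^2) * ENNReal.ofReal (‖y‖ ^ p) := by
    rintro y ⟨hy0, hy1⟩
    rw [← ENNReal.ofReal_mul (by positivity)]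
    apply ENNReal.ofReal_le_ofReal
    have h1 : ‖y‖ ≤ ‖y‖ ^ γ := by
      have := Real.rpow_le_rpow_of_exponent_ge hy0 hy1.le hγ.2.le
      rwa [Real.rpow_one] at this
    have h2 : ‖zvonkinSigma bhat Ψ σ x₁ y - zvonkinSigma bhat Ψ σ x₂ y‖
        ≤ C * D * (2 * ‖y‖ ^ γ) := by
      refine (hmain x₁ x₂ y).trans ?_
      have hCD : (0:ℝ) ≤ C * D := by positivity
      nlinarith
    have h3 : ‖zvonkinSigma bhat Ψ σ x₁ y - zvonkinSigma bhat Ψ σ x₂ y‖ ^ 2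
        ≤ 4*C^2*D^2 * ‖y‖ ^ (2*γ) := by
      have h4 := pow_le_pow_left₀ (norm_nonneg _) h2 2
      have h5 : (‖y‖ ^ γ) ^ (2:ℕ) = ‖y‖ ^ (2*γ) := by
        rw [← Real.rpow_natCast (‖y‖ ^ γ) 2, ← Real.rpow_mul (norm_nonneg y)]
        norm_num [mul_comm]
      calc ‖zvonkinSigma bhat Ψ σ x₁ y - zvonkinSigma bhat Ψ σ x₂ y‖ ^ 2
          ≤ (C * D * (2 * ‖y‖ ^ γ)) ^ 2 := h4
        _ = 4*C^2*D^2 * (‖y‖ ^ γ) ^ (2:ℕ) := by ring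
        _ = 4*C^2*D^2 * ‖y‖ ^ (2*γ) := by rw [h5]
    have h6 : (0:ℝ) ≤ ‖y‖ ^ (-((d : ℝ) + α)) := Real.rpow_nonneg (norm_nonneg _) _
    calc ‖zvonkinSigma bhat Ψ σ x₁ y - zvonkinSigma bhat Ψ σ x₂ y‖ ^ 2 *
          ‖y‖ ^ (-((d : ℝ) + α))
        ≤ (4*C^2*D^2 * ‖y‖ ^ (2*γ)) * ‖y‖ ^ (-((d : ℝ) + α)) :=
          mul_le_mul_of_nonneg_right h3 h6
      _ = 4*C^2*D^2 * ‖y‖ ^ p := by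
          rw [mul_assoc, ← Real.rpow_add hy0]
          congr 2
          rw [hpdef]; ring
  have hgmeas : Measurable fun y : Ed d =>
      ENNReal.ofReal (4*C^2*D^2) * ENNReal.ofReal (‖y‖ ^ p) :=
    measurable_const.mul ((measurable_norm.pow_const p).ennreal_ofReal)
  calc ∫⁻ y in {y : Ed d | 0 < ‖y‖ ∧ ‖y‖ < 1},
        ENNReal.ofReal
          (‖zvonkinSigma bhat Ψ σ x₁ y - zvonkinSigma bhat Ψ σ x₂ y‖ ^ 2 *
            ‖y‖ ^ (-((d : ℝ) + α)))
      ≤ ∫⁻ y in {y : Ed d | 0 < ‖y‖ ∧ ‖y‖ < 1},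
          ENNReal.ofReal (4*C^2*D^2) * ENNReal.ofReal (‖y‖ ^ p) :=
        setLIntegral_mono hgmeas hptws
    _ = ENNReal.ofReal (4*C^2*D^2) * I := lintegral_const_mul' _ _ ENNReal.ofReal_ne_top
    _ ≤ ENNReal.ofReal (4*C^2*D^2) * ENNReal.ofReal (I.toReal + 1) := by
        gcongr
        calc I = ENNReal.ofReal I.toReal := (ENNReal.ofReal_toReal hIne).symm
          _ ≤ ENNReal.ofReal (I.toReal + 1) := ENNReal.ofReal_le_ofReal (by linarith)
    _ = ENNReal.ofReal (4*C^2*(I.toReal+1) * D^2) := by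
        rw [← ENNReal.ofReal_mul (by positivity)]
        congr 1
        ring
end
end
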